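/- Let λ be an integer with |λ| ≥ 2 and let A ⊆ 𝕋 be a measurable set such that A ∩ λ·A = ∅. Then μ(A) < 1/2. -/

import Mathlib

open MeasureTheory

theorem measure_lt_half_of_disjoint_dilate (l : ℤ) (hl : 2 ≤ |l|)
    (A : Set UnitAddCircle) (hA : MeasurableSet A)
    (hdisj : A ∩ ((fun x => l • x) '' A) = ∅) :
    volume A < 1 / 2 := by
  have hl1 : 1 < |l| := by omega
  set T : UnitAddCircle → UnitAddCircle := fun x => l • x with hT
  have herg : Ergodic T volume := AddCircle.ergodic_zsmul hl1
  have hmp := herg.toMeasurePreserving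
  have hTm : Measurable T := hmp.measurable
  have hpre : A ∩ T ⁻¹' A = ∅ := by
    ext x
    simp only [Set.mem_inter_iff, Set.mem_preimage, Set.mem_empty_iff_false, iff_false, not_and]
    intro hx hTx
    have : T x ∈ A ∩ ((fun x => l • x) '' A) := ⟨hTx, ⟨x, hx, rfl⟩⟩
    rw [hdisj] at this
    exact this
  have hApre : volume (T ⁻¹' A) = volume A := hmp.measure_preimage hA.nullMeasurableSet
  have hd : Disjoint A (T ⁻¹' A) := Set.disjoint_iff_inter_eq_empty.mpr hpre
  have hunion : volume (A ∪ T ⁻¹' A) = volume A + volume A := by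
    rw [measure_union hd (hTm hA), hApre]
  have hle : volume A + volume A ≤ 1 := by
    rw [← hunion, ← UnitAddCircle.measure_univ]
    exact measure_mono (Set.subset_univ _)
  have hle2 : volume A ≤ 1 / 2 := by
    rw [ENNReal.le_div_iff_mul_le (by norm_num) (by norm_num), mul_comm, two_mul]
    exact hle
  rcases lt_or_eq_of_le hle2 with h | heq
  · exact h
  exfalso
  -- volume A = 1/2 exactly
  have hone : volume (A ∪ T ⁻¹' A) = 1 := by
    rw [hunion, heq]
    exact ENNReal.add_halves 1
  have hcnull : volume (A ∪ T ⁻¹' A)ᶜ = 0 := by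
    rw [measure_compl (hA.union (hTm hA)) (measure_ne_top _ _), UnitAddCircle.measure_univ, hone]
    simp
  -- T⁻¹A =ᵐ Aᶜ
  have hsub : Aᶜ \ T ⁻¹' A ⊆ (A ∪ T ⁻¹' A)ᶜ := by
    intro x hx
    simp only [Set.mem_compl_iff, Set.mem_union, not_or]
    exact ⟨hx.1, hx.2⟩
  have h1 : volume (Aᶜ \ T ⁻¹' A) = 0 := measure_mono_null hsub hcnull
  have h2 : volume (T ⁻¹' A \ Aᶜ) = 0 := by
    rw [Set.diff_compl, Set.inter_comm, hpre]
    exact measure_empty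
  have haeq : T ⁻¹' A =ᵐ[volume] Aᶜ := by
    refine Filter.eventuallyEq_set.mpr ?_
    have := MeasureTheory.ae_le_set.mpr h2
    have h1' := MeasureTheory.ae_le_set.mpr h1
    filter_upwards [this, h1'] with x hx hx'
    exact ⟨fun h => hx h, fun h => hx' h⟩
  -- iterate
  have herg2 : Ergodic (fun x : UnitAddCircle => (l * l) • x) volume := by
    refine AddCircle.ergodic_zsmul ?_
    rw [abs_mul]
    nlinarith
  have hqmp := hmp.quasiMeasurePreserving
  have hpre2 : (fun x : UnitAddCircle => (l * l) • x) ⁻¹' A =ᵐ[volume] A := by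
    have e1 : (fun x : UnitAddCircle => (l * l) • x) ⁻¹' A = T ⁻¹' (T ⁻¹' A) := by
      ext x
      simp only [Set.mem_preimage, hT, mul_smul]
    rw [e1]
    have e2 := hqmp.preimage_ae_eq haeq
    replace e2 : T ⁻¹' (T ⁻¹' A) =ᵐ[volume] (T ⁻¹' A)ᶜ := e2
    have e3 := haeq.compl
    replace e3 : (T ⁻¹' A)ᶜ =ᵐ[volume] A := ae_eq_set_compl.mpr haeq
    exact e2.trans e3
  rcases herg2.quasiErgodic.ae_empty_or_univ₀ hA.nullMeasurableSet hpre2 with h | h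
  · have : volume A = 0 := by
      rw [measure_congr h]; exact measure_empty
    rw [this] at heq
    exact absurd heq.symm (by norm_num [ENNReal.div_eq_zero_iff])
  · have : volume A = 1 := by
      rw [measure_congr h]; exact UnitAddCircle.measure_univ
    rw [this] at heq
    rw [eq_comm, ENNReal.div_eq_one_iff (by norm_num) (by norm_num)] at heq
    norm_num at heq
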